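/- Let ε ∈ ℝ, h > 0, and let θ : ℤ → ℝ satisfy sin((θₙ₊₁ − 2θₙ + θₙ₋₁)/4) + ε sin((θₙ₊₁ + 2θₙ + θₙ₋₁)/4) = 0 for all n ∈ ℤ. Let Λ = cos((θₙ₊₁ − θₙ)/2) + ε cos((θₙ₊₁ + θₙ)/2) (independent of n) and assume Λ ≠ 0 and cos((θₙ₊₁ − θₙ₋₁)/4) ≠ 0 for all n. Then κₙ := (2/h) tan((θₙ₊₁ − θₙ₋₁)/4) satisfies (κₙ₊₁ + κₙ₋₁)(1 + (h²/4)κₙ²) = α κₙ for all n, with α = 2(1 − ε²)/Λ². -/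

import Mathlib

open Real in
lemma key_trig (ε Λ am a ap dm sm dp sp : ℝ)
    (hsum : ap + am = 2 * a + dp - dm)
    (hrel : sp - dp = sm - dm + (2 * a + 2 * a))
    (pm : Real.sin dm + ε * Real.sin sm = 0)
    (pp : Real.sin dp + ε * Real.sin sp = 0)
    (Lm : Λ = Real.cos am * (Real.cos dm + ε * Real.cos sm))
    (Lp : Λ = Real.cos ap * (Real.cos dp + ε * Real.cos sp))
    (hm : Real.cos am ≠ 0) (ha : Real.cos a ≠ 0) (hp : Real.cos ap ≠ 0) :
    (Real.tan ap + Real.tan am) * Λ ^ 2 * (1 + Real.tan a ^ 2)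
      = 2 * (1 - ε ^ 2) * Real.tan a := by
  have f1m : (Real.cos dm + ε * Real.cos sm) * Real.cos dm = 1 + ε * Real.cos (sm - dm) := by
    rw [Real.cos_sub]
    linear_combination Real.sin_sq_add_cos_sq dm - Real.sin dm * pm
  have f2m : (Real.cos dm + ε * Real.cos sm) * Real.sin dm = -(ε * Real.sin (sm - dm)) := by
    rw [Real.sin_sub]
    linear_combination Real.cos dm * pm
  have f1p : (Real.cos dp + ε * Real.cos sp) * Real.cos dp = 1 + ε * Real.cos (sp - dp) := by
    rw [Real.cos_sub]
    linear_combination Real.sin_sq_add_cos_sq dp - Real.sin dp * pp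
  have f2p : (Real.cos dp + ε * Real.cos sp) * Real.sin dp = -(ε * Real.sin (sp - dp)) := by
    rw [Real.sin_sub]
    linear_combination Real.cos dp * pp
  have hDc : Real.cos (sp - dp)
      = Real.cos (sm - dm) * (Real.cos (2*a) ^ 2 - Real.sin (2*a) ^ 2)
        - Real.sin (sm - dm) * (2 * Real.sin (2*a) * Real.cos (2*a)) := by
    rw [hrel, Real.cos_add, Real.cos_add, Real.sin_add]; ring
  have hDs : Real.sin (sp - dp)
      = Real.sin (sm - dm) * (Real.cos (2*a) ^ 2 - Real.sin (2*a) ^ 2)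
        + Real.cos (sm - dm) * (2 * Real.sin (2*a) * Real.cos (2*a)) := by
    rw [hrel, Real.sin_add, Real.cos_add, Real.sin_add]; ring
  have X1 : Real.sin (ap + am) * ((Real.cos dp + ε * Real.cos sp) * (Real.cos dm + ε * Real.cos sm))
      = Real.sin (2*a) * (((Real.cos dp + ε * Real.cos sp) * Real.cos dp) * ((Real.cos dm + ε * Real.cos sm) * Real.cos dm)
          + ((Real.cos dp + ε * Real.cos sp) * Real.sin dp) * ((Real.cos dm + ε * Real.cos sm) * Real.sin dm))
        + Real.cos (2*a) * (((Real.cos dp + ε * Real.cos sp) * Real.sin dp) * ((Real.cos dm + ε * Real.cos sm) * Real.cos dm)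
          - ((Real.cos dp + ε * Real.cos sp) * Real.cos dp) * ((Real.cos dm + ε * Real.cos sm) * Real.sin dm)) := by
    rw [show ap + am = 2*a + dp - dm from hsum, Real.sin_sub, Real.sin_add, Real.cos_add]
    ring
  rw [f1m, f2m, f1p, f2p, hDc, hDs] at X1
  have e2 : Real.sin (ap + am) * ((Real.cos dp + ε * Real.cos sp) * (Real.cos dm + ε * Real.cos sm))
      = (1 - ε ^ 2) * Real.sin (2*a) := by
    linear_combination X1
      + (-(ε * (Real.sin (2*a) * Real.cos (sm - dm) + Real.cos (2*a) * Real.sin (sm - dm))) - ε^2 * Real.sin (2*a)) * Real.sin_sq_add_cos_sq (2*a)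
      + (-(ε^2 * Real.sin (2*a) * (Real.sin (2*a)^2 + Real.cos (2*a)^2))) * Real.sin_sq_add_cos_sq (sm - dm)
  have key2 : Real.sin (ap + am) * Λ ^ 2
      = 2 * (1 - ε ^ 2) * Real.sin a * Real.cos a * (Real.cos ap * Real.cos am) := by
    have LL : Λ ^ 2 = (Real.cos ap * (Real.cos dp + ε * Real.cos sp)) * (Real.cos am * (Real.cos dm + ε * Real.cos sm)) := by
      linear_combination Λ * Lp + (Real.cos ap * (Real.cos dp + ε * Real.cos sp)) * Lm
    rw [LL]
    linear_combination (Real.cos ap * Real.cos am) * e2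
      + (1 - ε^2) * (Real.cos ap * Real.cos am) * Real.sin_two_mul a
  rw [Real.sin_add] at key2
  rw [Real.tan_eq_sin_div_cos, Real.tan_eq_sin_div_cos, Real.tan_eq_sin_div_cos]
  field_simp
  linear_combination key2 + (Real.sin ap * Real.cos am + Real.cos ap * Real.sin am) * Λ ^ 2 * Real.sin_sq_add_cos_sq a

/-- If θ satisfies the discrete pendulum equation with conserved
quantity Λ ≠ 0, then the discrete curvature `κₙ = (2/h) tan((θₙ₊₁ − θₙ₋₁)/4)` satisfies
the discrete elastica recurrence with `α = 2(1 − ε²)/Λ²`. -/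
theorem discrete_pendulum_implies_elastica_recurrence (ε h : ℝ) (hh : 0 < h)
    (θ : ℤ → ℝ)
    (hpend : ∀ n : ℤ,
      Real.sin ((θ (n + 1) - 2 * θ n + θ (n - 1)) / 4)
        + ε * Real.sin ((θ (n + 1) + 2 * θ n + θ (n - 1)) / 4) = 0)
    (Λ : ℝ)
    (hΛ : ∀ n : ℤ,
      Real.cos ((θ (n + 1) - θ n) / 2) + ε * Real.cos ((θ (n + 1) + θ n) / 2) = Λ)
    (hΛ0 : Λ ≠ 0)
    (hcos : ∀ n : ℤ, Real.cos ((θ (n + 1) - θ (n - 1)) / 4) ≠ 0)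
    (κ : ℤ → ℝ) (hκ : ∀ n : ℤ, κ n = 2 / h * Real.tan ((θ (n + 1) - θ (n - 1)) / 4)) :
    ∀ n : ℤ,
      (κ (n + 1) + κ (n - 1)) * (1 + h ^ 2 / 4 * (κ n) ^ 2)
        = (2 * (1 - ε ^ 2) / Λ ^ 2) * κ n := by
  intro n
  have i1 : n - 1 + 1 = n := by ring
  have i2 : n - 1 - 1 = n - 2 := by ring
  have i3 : n + 1 + 1 = n + 2 := by ring
  have i4 : n + 1 - 1 = n := by ring
  have i5 : n - 2 + 1 = n - 1 := by ring
  -- pendulum at n-1 and n+1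
  have pB := hpend (n - 1)
  rw [i1, i2] at pB
  have pD := hpend (n + 1)
  rw [i3, i4] at pD
  -- conserved quantity equations
  have h0 := hΛ n
  have h1 := hΛ (n - 1)
  rw [i1] at h1
  have h2 := hΛ (n - 2)
  rw [i5] at h2
  have h3 := hΛ (n + 1)
  rw [i3] at h3
  -- Lm
  have Lm : Λ = Real.cos ((θ n - θ (n - 2)) / 4)
      * (Real.cos ((θ n - 2 * θ (n - 1) + θ (n - 2)) / 4)
        + ε * Real.cos ((θ n + 2 * θ (n - 1) + θ (n - 2)) / 4)) := by
    have c1 : Real.cos ((θ n - θ (n - 1)) / 2) + Real.cos ((θ (n - 1) - θ (n - 2)) / 2)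
        = 2 * Real.cos ((θ n - θ (n - 2)) / 4) * Real.cos ((θ n - 2 * θ (n - 1) + θ (n - 2)) / 4) := by
      rw [Real.cos_add_cos]; ring_nf
    have c2 : Real.cos ((θ n + θ (n - 1)) / 2) + Real.cos ((θ (n - 1) + θ (n - 2)) / 2)
        = 2 * Real.cos ((θ n + 2 * θ (n - 1) + θ (n - 2)) / 4) * Real.cos ((θ n - θ (n - 2)) / 4) := by
      rw [Real.cos_add_cos]; ring_nf
    linear_combination (c1 + ε * c2 - h1 - h2) / 2
  have Lp : Λ = Real.cos ((θ (n + 2) - θ n) / 4)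
      * (Real.cos ((θ (n + 2) - 2 * θ (n + 1) + θ n) / 4)
        + ε * Real.cos ((θ (n + 2) + 2 * θ (n + 1) + θ n) / 4)) := by
    have c1 : Real.cos ((θ (n + 2) - θ (n + 1)) / 2) + Real.cos ((θ (n + 1) - θ n) / 2)
        = 2 * Real.cos ((θ (n + 2) - θ n) / 4) * Real.cos ((θ (n + 2) - 2 * θ (n + 1) + θ n) / 4) := by
      rw [Real.cos_add_cos]; ring_nf
    have c2 : Real.cos ((θ (n + 2) + θ (n + 1)) / 2) + Real.cos ((θ (n + 1) + θ n) / 2)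
        = 2 * Real.cos ((θ (n + 2) + 2 * θ (n + 1) + θ n) / 4) * Real.cos ((θ (n + 2) - θ n) / 4) := by
      rw [Real.cos_add_cos]; ring_nf
    linear_combination (c1 + ε * c2 - h3 - h0) / 2
  have hm := hcos (n - 1)
  rw [i1, i2] at hm
  have ha := hcos n
  have hp := hcos (n + 1)
  rw [i3, i4] at hp
  have K := key_trig ε Λ ((θ n - θ (n - 2)) / 4) ((θ (n + 1) - θ (n - 1)) / 4)
      ((θ (n + 2) - θ n) / 4)
      ((θ n - 2 * θ (n - 1) + θ (n - 2)) / 4) ((θ n + 2 * θ (n - 1) + θ (n - 2)) / 4)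
      ((θ (n + 2) - 2 * θ (n + 1) + θ n) / 4) ((θ (n + 2) + 2 * θ (n + 1) + θ n) / 4)
      (by ring) (by ring) pB pD Lm Lp hm ha hp
  have hκ1 := hκ (n + 1)
  rw [i3, i4] at hκ1
  have hκ2 := hκ (n - 1)
  rw [i1, i2] at hκ2
  have hκ0 := hκ n
  rw [hκ1, hκ2, hκ0]
  have hne : h ≠ 0 := ne_of_gt hh
  field_simp
  linear_combination 4 * K
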